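/- Let g ∈ ℝ[x₁,…,xₙ] be homogeneous of degree d with compact sublevel set G = {x : g(x) ≤ 1}, coefficient vector g = (g_β)_{|β|=d}, and moments λ_γ = ∫_G x^γ dx. Then for every multi-index α with |α| = d: Σ_{|β|=d} g_β λ_{α+β} = ((n+d)/(n+2d)) λ_α. Equivalently, M_d(λ) g = ((n+d)/(n+2d)) λ^{(d)}, where λ^{(d)} = (λ_α)_{|α|=d}. -/

import Mathlib

open MeasureTheory

section Aux
variable {n d : ℕ} {g : MvPolynomial (Fin n) ℝ}

lemma aux_eval_smul (hg : g.IsHomogeneous d) (c : ℝ) (x : Fin n → ℝ) :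
    MvPolynomial.eval (c • x) g = c ^ d * MvPolynomial.eval x g := by
  rw [MvPolynomial.eval_eq, MvPolynomial.eval_eq, Finset.mul_sum]
  refine Finset.sum_congr rfl fun β hβ => ?_
  have hdeg : ∑ i ∈ β.support, β i = d := by
    have := hg (MvPolynomial.mem_support_iff.1 hβ)
    change (Finsupp.weight (fun _ => (1:ℕ))) β = d at this
    rw [← Finsupp.degree_eq_weight_one] at this; simpa [Finsupp.degree_apply] using this
  rw [← hdeg]
  simp only [Pi.smul_apply, smul_eq_mul, mul_pow, Finset.prod_mul_distrib,
    Finset.prod_pow_eq_pow_sum]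
  ring

lemma aux_nonneg (hd : 0 < d) (hg : g.IsHomogeneous d)
    (hK : IsCompact {x : Fin n → ℝ | MvPolynomial.eval x g ≤ 1}) (x : Fin n → ℝ) :
    0 ≤ MvPolynomial.eval x g := by
  by_contra hneg
  push_neg at hneg
  have hx0 : x ≠ 0 := by
    rintro rfl
    have h0 : MvPolynomial.eval ((0:ℝ) • (0 : Fin n → ℝ)) g = 0 := by
      rw [aux_eval_smul hg, zero_pow hd.ne', zero_mul]
    rw [zero_smul] at h0
    rw [h0] at hneg; exact lt_irrefl _ hneg
  obtain ⟨R, hR⟩ := hK.isBounded.exists_norm_le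
  have hxnorm : 0 < ‖x‖ := norm_pos_iff.2 hx0
  set t : ℝ := (|R| + 1) / ‖x‖ with ht
  have htpos : 0 < t := by positivity
  have hmem : t • x ∈ {x : Fin n → ℝ | MvPolynomial.eval x g ≤ 1} := by
    show MvPolynomial.eval (t • x) g ≤ 1
    rw [aux_eval_smul hg]
    exact le_trans (mul_nonpos_of_nonneg_of_nonpos (pow_nonneg htpos.le d) hneg.le) zero_le_one
  have hnb := hR _ hmem
  rw [norm_smul, Real.norm_eq_abs, abs_of_pos htpos, ht, div_mul_cancel₀ _ hxnorm.ne'] at hnb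
  have hRabs : R ≤ |R| := le_abs_self R
  linarith

lemma aux_tint (hn : 0 < n) (hd : 0 < d) :
    (∫ t in Set.Ioc (0:ℝ) 1, t ^ (((n:ℝ) + d) / d)) = (d:ℝ) / ((n:ℝ) + 2 * d) := by
  have hd0 : (d:ℝ) ≠ 0 := Nat.cast_ne_zero.2 hd.ne'
  have hr : (0:ℝ) < ((n:ℝ) + d) / d := by positivity
  have h1 : (∫ t in Set.Ioc (0:ℝ) 1, t ^ (((n:ℝ) + d) / d))
      = ∫ t in (0:ℝ)..1, t ^ (((n:ℝ) + d) / d) := by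
    rw [intervalIntegral.integral_of_le zero_le_one]
  rw [h1, integral_rpow (Or.inl (by linarith))]
  rw [Real.one_rpow, Real.zero_rpow (by positivity)]
  have h2 : ((n:ℝ) + d) / d + 1 = ((n:ℝ) + 2 * d) / d := by
    field_simp; ring
  rw [sub_zero, h2, one_div_div]

end Aux

/-- For `g` homogeneous of degree `d` with compact sublevel set `G = {g ≤ 1}` and
moments `L γ = ∫_G x^γ dx`, for every multi-index `α` with `|α| = d`:
`Σ_{β} g_β L(α+β) = ((n+d)/(n+2d)) L α`. -/
theorem linear_system_for_coefficients (n d : ℕ) (hn : 0 < n) (hd : 0 < d)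
    (g : MvPolynomial (Fin n) ℝ) (hg : g.IsHomogeneous d)
    (hK : IsCompact {x : Fin n → ℝ | MvPolynomial.eval x g ≤ 1})
    (L : (Fin n →₀ ℕ) → ℝ)
    (hL : ∀ γ : Fin n →₀ ℕ,
      L γ = ∫ x in {x : Fin n → ℝ | MvPolynomial.eval x g ≤ 1}, ∏ i, x i ^ γ i) :
    ∀ α : Fin n →₀ ℕ, (∑ i, α i) = d →
      ∑ β ∈ g.support, MvPolynomial.coeff β g * L (α + β) =
        (((n : ℝ) + d) / ((n : ℝ) + 2 * d)) * L α := by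
  intro α hα
  set G : Set (Fin n → ℝ) := {x : Fin n → ℝ | MvPolynomial.eval x g ≤ 1} with hG
  have hcont : Continuous fun x : Fin n → ℝ => MvPolynomial.eval x g :=
    MvPolynomial.continuous_eval g
  have hGmeas : MeasurableSet G := (isClosed_le hcont continuous_const).measurableSet
  have hgnn : ∀ x, 0 ≤ MvPolynomial.eval x g := aux_nonneg hd hg hK
  set P : (Fin n → ℝ) → ℝ := fun x => ∏ i, x i ^ α i with hP
  have hPcont : Continuous P := by continuity
  have hd0 : (d:ℝ) ≠ 0 := Nat.cast_ne_zero.2 hd.ne'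
  -- Step 1: LHS = ∫_G g(x) x^α
  have step1 : ∑ β ∈ g.support, MvPolynomial.coeff β g * L (α + β) =
      ∫ x in G, MvPolynomial.eval x g * P x := by
    have key : ∀ x : Fin n → ℝ, MvPolynomial.eval x g * P x
        = ∑ β ∈ g.support, MvPolynomial.coeff β g * ∏ i, x i ^ (α + β) i := by
      intro x
      rw [hP, MvPolynomial.eval_eq', Finset.sum_mul]
      refine Finset.sum_congr rfl fun β _ => ?_
      simp only [Finsupp.add_apply, pow_add, Finset.prod_mul_distrib]
      ring
    rw [setIntegral_congr_fun hGmeas (fun x _ => key x), integral_finset_sum]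
    · exact Finset.sum_congr rfl fun β _ => by
        rw [hL (α + β), MeasureTheory.integral_const_mul]
    · intro β _
      exact (continuous_const.mul (by continuity)).continuousOn.integrableOn_compact hK
  -- scaling
  have scaling : ∀ t : ℝ, t ∈ Set.Ioc (0:ℝ) 1 →
      (∫ x in {x : Fin n → ℝ | MvPolynomial.eval x g ≤ t}, P x)
        = t ^ (((n:ℝ) + d) / d) * L α := by
    intro t ht
    set c : ℝ := t ^ ((d:ℝ)⁻¹) with hc
    have hcpos : 0 < c := Real.rpow_pos_of_pos ht.1 _
    have hcd : c ^ d = t := by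
      rw [hc, ← Real.rpow_natCast (t ^ ((d:ℝ)⁻¹)) d, ← Real.rpow_mul ht.1.le,
        inv_mul_cancel₀ hd0, Real.rpow_one]
    set f : (Fin n → ℝ) → ℝ := Set.indicator {x | MvPolynomial.eval x g ≤ t} P with hf
    have hmeas : MeasurableSet {x : Fin n → ℝ | MvPolynomial.eval x g ≤ t} :=
      (isClosed_le hcont continuous_const).measurableSet
    have h1 : (∫ x in {x : Fin n → ℝ | MvPolynomial.eval x g ≤ t}, P x) = ∫ x, f x := by
      rw [hf, integral_indicator hmeas]
    have hsmul : ∀ x, f (c • x) = c ^ d * Set.indicator G P x := by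
      intro x
      have hPc : P (c • x) = c ^ d * P x := by
        rw [hP]
        simp only [Pi.smul_apply, smul_eq_mul, mul_pow, Finset.prod_mul_distrib,
          Finset.prod_pow_eq_pow_sum, hα]
      have hcond : MvPolynomial.eval (c • x) g ≤ t ↔ MvPolynomial.eval x g ≤ 1 := by
        rw [aux_eval_smul hg, ← hcd]
        constructor
        · intro h; nlinarith [pow_pos hcpos d]
        · intro h; nlinarith [pow_pos hcpos d]
      by_cases hx : MvPolynomial.eval x g ≤ 1
      · rw [hf, Set.indicator_of_mem (by simpa [Set.mem_setOf_eq, hcond] using hx),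
          Set.indicator_of_mem (by exact hx), hPc]
      · rw [hf, Set.indicator_of_notMem (by simpa [Set.mem_setOf_eq, hcond] using hx),
          Set.indicator_of_notMem (by exact hx), mul_zero]
    have hcomp := MeasureTheory.Measure.integral_comp_smul_of_nonneg (μ := volume) f c
      (hR := hcpos.le)
    rw [Module.finrank_fin_fun] at hcomp
    have h2 : (∫ x, f (c • x)) = c ^ d * L α := by
      rw [hL α]
      simp_rw [hsmul]
      rw [MeasureTheory.integral_const_mul, integral_indicator hGmeas]
    rw [h1]
    have h3 : (∫ x, f x) = c ^ n * (c ^ d * L α) := by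
      rw [← h2, hcomp]
      rw [smul_eq_mul, ← mul_assoc, mul_inv_cancel₀ (by positivity), one_mul]
    rw [h3]
    have hcnd : c ^ n * c ^ d = t ^ (((n:ℝ) + d) / d) := by
      rw [← pow_add, hc, ← Real.rpow_natCast (t ^ ((d:ℝ)⁻¹)) (n + d),
        ← Real.rpow_mul ht.1.le]
      congr 1
      push_cast
      field_simp
    rw [← mul_assoc, hcnd]
  -- Fubini
  have fubini : ∫ x in G, (1 - MvPolynomial.eval x g) * P x =
      ∫ t in Set.Ioc (0:ℝ) 1,
        (∫ x in {x : Fin n → ℝ | MvPolynomial.eval x g ≤ t}, P x) := by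
    set S : Set ((Fin n → ℝ) × ℝ) := {p | MvPolynomial.eval p.1 g ≤ p.2} with hS
    have hSmeas : MeasurableSet S :=
      (isClosed_le (hcont.comp continuous_fst) continuous_snd).measurableSet
    set F : (Fin n → ℝ) → ℝ → ℝ := fun x t => S.indicator (fun q => P q.1) (x, t) with hF
    set μ : Measure (Fin n → ℝ) := volume.restrict G with hμ
    set ν : Measure ℝ := volume.restrict (Set.Ioc (0:ℝ) 1) with hν
    haveI : IsFiniteMeasure μ :=
      ⟨by rw [hμ, Measure.restrict_apply_univ]; exact hK.measure_lt_top⟩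
    haveI : IsFiniteMeasure ν := ⟨by
      rw [hν, Measure.restrict_apply_univ]
      simp [Real.volume_Ioc]⟩
    obtain ⟨C, hC⟩ := hK.exists_bound_of_continuousOn hPcont.continuousOn
    have hFmeas : AEStronglyMeasurable (Function.uncurry F) (μ.prod ν) := by
      have h : Measurable (Function.uncurry F) := by
        have h' : Function.uncurry F = S.indicator (fun q => P q.1) := rfl
        rw [h']
        exact (hPcont.comp continuous_fst).measurable.indicator hSmeas
      exact h.aestronglyMeasurable
    have hbound : ∀ᵐ p ∂(μ.prod ν), ‖Function.uncurry F p‖ ≤ max C 0 := by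
      have hprod : μ.prod ν = (volume.prod volume).restrict (G ×ˢ Set.Ioc (0:ℝ) 1) := by
        rw [hμ, hν, Measure.prod_restrict]
      rw [hprod]
      filter_upwards [ae_restrict_mem (hGmeas.prod measurableSet_Ioc)] with p hp
      have h1 : ‖Function.uncurry F p‖ ≤ ‖P p.1‖ :=
        norm_indicator_le_norm_self (s := S) (f := fun q : (Fin n → ℝ) × ℝ => P q.1) (a := p)
      refine h1.trans ?_
      rw [Real.norm_eq_abs]
      exact le_max_of_le_left (by simpa using hC p.1 hp.1)
    have hFint : Integrable (Function.uncurry F) (μ.prod ν) :=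
      Integrable.mono' (integrable_const _) hFmeas hbound
    have hswap := MeasureTheory.integral_integral_swap hFint
    have hLHS : (∫ x, ∫ t, F x t ∂ν ∂μ) =
        ∫ x in G, (1 - MvPolynomial.eval x g) * P x := by
      rw [hμ]
      refine setIntegral_congr_fun hGmeas fun x hx => ?_
      have hx1 : MvPolynomial.eval x g ≤ 1 := hx
      have hx0 : 0 ≤ MvPolynomial.eval x g := hgnn x
      have heq : ∀ t, F x t = Set.indicator (Set.Ici (MvPolynomial.eval x g))
          (fun _ => P x) t := by
        intro t
        simp [hF, hS, Set.indicator_apply, Set.mem_Ici, Set.mem_setOf_eq]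
      simp_rw [heq]
      rw [hν, integral_indicator measurableSet_Ici,
        Measure.restrict_restrict measurableSet_Ici, setIntegral_const]
      have hvol : volume (Set.Ici (MvPolynomial.eval x g) ∩ Set.Ioc (0:ℝ) 1)
          = ENNReal.ofReal (1 - MvPolynomial.eval x g) := by
        apply le_antisymm
        · refine le_trans (measure_mono ?_)
            (le_of_eq (Real.volume_Icc (a := MvPolynomial.eval x g) (b := 1)))
          rintro t ⟨h1', h2'⟩
          exact ⟨h1', h2'.2⟩
        · refine le_trans
            (le_of_eq (Real.volume_Ioc (a := MvPolynomial.eval x g) (b := 1)).symm)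
            (measure_mono ?_)
          rintro t ⟨h1', h2'⟩
          exact ⟨le_of_lt h1', lt_of_le_of_lt hx0 h1', h2'⟩
      rw [measureReal_def, hvol, ENNReal.toReal_ofReal (by linarith), smul_eq_mul]
    have hRHS : (∫ t, ∫ x, F x t ∂μ ∂ν) =
        ∫ t in Set.Ioc (0:ℝ) 1,
          (∫ x in {x : Fin n → ℝ | MvPolynomial.eval x g ≤ t}, P x) := by
      rw [hν]
      refine setIntegral_congr_fun measurableSet_Ioc fun t ht => ?_
      have hmeast : MeasurableSet {x : Fin n → ℝ | MvPolynomial.eval x g ≤ t} :=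
        (isClosed_le hcont continuous_const).measurableSet
      have heq : ∀ x, F x t
          = Set.indicator {x : Fin n → ℝ | MvPolynomial.eval x g ≤ t} P x := by
        intro x
        simp [hF, hS, Set.indicator_apply, Set.mem_setOf_eq]
      simp_rw [heq]
      rw [hμ, integral_indicator hmeast, Measure.restrict_restrict hmeast]
      congr 1
      rw [Set.inter_eq_left.2]
      intro x hx
      exact le_trans hx ht.2
    rw [← hLHS, ← hRHS, hswap]
  -- evaluate the t-integral
  have trint : (∫ t in Set.Ioc (0:ℝ) 1,
      (∫ x in {x : Fin n → ℝ | MvPolynomial.eval x g ≤ t}, P x))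
      = ((d:ℝ) / ((n:ℝ) + 2 * d)) * L α := by
    rw [setIntegral_congr_fun measurableSet_Ioc (fun t ht => scaling t ht),
      MeasureTheory.integral_mul_const, aux_tint hn hd]
  have hint1 : IntegrableOn (fun x => MvPolynomial.eval x g * P x) G :=
    (hcont.mul hPcont).continuousOn.integrableOn_compact hK
  have hint2 : IntegrableOn P G := hPcont.continuousOn.integrableOn_compact hK
  have split : ∫ x in G, (1 - MvPolynomial.eval x g) * P x =
      (∫ x in G, P x) - ∫ x in G, MvPolynomial.eval x g * P x := by
    rw [← integral_sub hint2 hint1]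
    congr 1; ext x; ring
  have hLα : L α = ∫ x in G, P x := hL α
  have hden : ((n:ℝ) + 2 * d) ≠ 0 := by positivity
  have E1 := fubini.symm.trans split
  rw [trint, ← hLα] at E1
  rw [step1]
  have key : (((n:ℝ) + d) / ((n:ℝ) + 2 * d)) * L α
      = L α - ((d:ℝ) / ((n:ℝ) + 2 * d)) * L α := by
    field_simp
    ring
  rw [key]
  linarith
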